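/- Let g : ℝⁿ → ℝ be differentiable with L-Lipschitz gradient, let C ⊆ ℝⁿ be nonempty and closed, let 0 < μ, and let x⁺ be any minimizer over C of the function y ↦ ‖y − (x − μ ∇g(x))‖² where x ∈ C. Then g(x⁺) ≤ g(x) − (1/(2μ) − L/2)‖x⁺ − x‖². -/

import Mathlib

open Real

theorem projected_gradient_descent_step {n : ℕ} (g : EuclideanSpace ℝ (Fin n) → ℝ) (L : ℝ)
    (hg : Differentiable ℝ g)
    (hL : ∀ x y, ‖gradient g x - gradient g y‖ ≤ L * ‖x - y‖)
    (C : Set (EuclideanSpace ℝ (Fin n))) (hCne : C.Nonempty) (hC : IsClosed C)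
    (μ : ℝ) (hμ : 0 < μ) (x xp : EuclideanSpace ℝ (Fin n)) (hx : x ∈ C) (hxp : xp ∈ C)
    (hmin : ∀ y ∈ C, ‖xp - (x - μ • gradient g x)‖ ^ 2 ≤ ‖y - (x - μ • gradient g x)‖ ^ 2) :
    g xp ≤ g x - (1 / (2 * μ) - L / 2) * ‖xp - x‖ ^ 2 := by
  set v := xp - x with hv
  -- gradient is Lipschitz (with constant L.toNNReal), hence continuous
  have hlip : LipschitzWith L.toNNReal (gradient g) := by
    apply LipschitzWith.of_dist_le_mul
    intro a b
    rw [dist_eq_norm, dist_eq_norm]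
    refine (hL a b).trans (mul_le_mul_of_nonneg_right ?_ (norm_nonneg _))
    rw [Real.coe_toNNReal']
    exact le_max_left _ _
  -- derivative along the segment
  have key : ∀ t : ℝ, HasDerivAt (fun s : ℝ => g (x + s • v))
      ((inner ℝ (gradient g (x + t • v)) v : ℝ)) t := by
    intro t
    have h1 : HasDerivAt (fun s : ℝ => x + s • v) v t := by
      simpa using ((hasDerivAt_id t).smul_const v).const_add x
    have h2 := (hg (x + t • v)).hasGradientAt.hasFDerivAt
    have h3 := h2.comp_hasDerivAt t h1
    exact h3.congr_deriv (by rw [InnerProductSpace.toDual_apply_apply])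
  have hcont : Continuous (fun t : ℝ => (inner ℝ (gradient g (x + t • v)) v : ℝ)) := by
    exact (hlip.continuous.comp (continuous_const.add (continuous_id.smul continuous_const))).inner continuous_const
  have hint : IntervalIntegrable (fun t : ℝ => (inner ℝ (gradient g (x + t • v)) v : ℝ))
      MeasureTheory.volume 0 1 := hcont.intervalIntegrable 0 1
  have heq : ∫ t in (0:ℝ)..1, (inner ℝ (gradient g (x + t • v)) v : ℝ)
      = g xp - g x := by
    have := intervalIntegral.integral_eq_sub_of_hasDerivAt (fun t _ => key t) hint
    simpa [hv] using this
  -- pointwise bound on the integrand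
  have hbd : ∀ t ∈ Set.Icc (0:ℝ) 1, (inner ℝ (gradient g (x + t • v)) v : ℝ)
      ≤ (inner ℝ (gradient g x) v : ℝ) + L * ‖v‖ ^ 2 * t := by
    intro t ht
    have h1 : (inner ℝ (gradient g (x + t • v)) v : ℝ) - (inner ℝ (gradient g x) v : ℝ)
        = (inner ℝ (gradient g (x + t • v) - gradient g x) v : ℝ) := by
      rw [inner_sub_left]
    have h2 := real_inner_le_norm (gradient g (x + t • v) - gradient g x) v
    have h3 := hL (x + t • v) x
    have h4 : ‖x + t • v - x‖ = t * ‖v‖ := by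
      simp [norm_smul, abs_of_nonneg ht.1]
    rw [h4] at h3
    nlinarith [norm_nonneg v, norm_nonneg (gradient g (x + t • v) - gradient g x)]
  have hint2 : IntervalIntegrable (fun t : ℝ => (inner ℝ (gradient g x) v : ℝ) + L * ‖v‖ ^ 2 * t)
      MeasureTheory.volume 0 1 := ((continuous_const.add (continuous_const.mul continuous_id)) : Continuous _).intervalIntegrable 0 1
  have hmono := intervalIntegral.integral_mono_on (by norm_num : (0:ℝ) ≤ 1) hint hint2
    (fun t ht => hbd t ht)
  have hval : ∫ t in (0:ℝ)..1, ((inner ℝ (gradient g x) v : ℝ) + L * ‖v‖ ^ 2 * t)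
      = (inner ℝ (gradient g x) v : ℝ) + L * ‖v‖ ^ 2 / 2 := by
    rw [intervalIntegral.integral_add (intervalIntegrable_const)
      ((by fun_prop : Continuous fun t : ℝ => L * ‖v‖ ^ 2 * t).intervalIntegrable 0 1),
      intervalIntegral.integral_const, intervalIntegral.integral_const_mul, integral_id]
    norm_num
    ring
  -- the minimality condition at y = x
  have hm := hmin x hx
  have e1 : xp - (x - μ • gradient g x) = v + μ • gradient g x := by
    rw [hv]; abel
  have e2 : x - (x - μ • gradient g x) = μ • gradient g x := by abel
  rw [e1, e2] at hm
  have hexp := norm_add_sq_real v (μ • gradient g x)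
  have hin : (inner ℝ v (μ • gradient g x) : ℝ) = μ * (inner ℝ (gradient g x) v : ℝ) := by
    rw [real_inner_smul_right, real_inner_comm]
  rw [hexp, hin] at hm
  have hGv : (inner ℝ (gradient g x) v : ℝ) ≤ -‖v‖ ^ 2 / (2 * μ) := by
    rw [le_div_iff₀ (by positivity : (0:ℝ) < 2 * μ)]
    nlinarith
  have h2μ : ‖v‖ ^ 2 / (2 * μ) = 1 / (2 * μ) * ‖v‖ ^ 2 := by ring
  rw [heq, hval] at hmono
  have : -‖v‖ ^ 2 / (2 * μ) = -(1 / (2 * μ) * ‖v‖ ^ 2) := by ring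
  nlinarith [hmono, hGv]
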